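/- Let f₀ : ℝ^n → ℝ∪{∞} and h : ℝ^m → ℝ∪{∞} be proper lsc, each Gᵢ : ℝ^n → ℝ^m continuous, p, p^ν ∈ Δ, θ^ν → ∞, θ^ν‖p^ν−p‖₂² → 0. Define f(u,x) = f₀(x) + h(u + Σᵢ pᵢGᵢ(x)) + ι_{{0}}(u) and f^ν(u,x) = f₀(x) + h(u + Σᵢ pᵢ^νGᵢ(x)) + (θ^ν/2)‖u‖₂². Then f^ν epi-converges to f on ℝ^m × ℝ^n. -/

import Mathlib

open Filter Topology
open scoped Classical

private lemma stmt15_split_lt_add {a b : EReal} (ha : a ≠ ⊥) (hb : b ≠ ⊥) (d : ℝ)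
    (hd : (d : EReal) < a + b) :
    ∃ c c' : ℝ, (c : EReal) < a ∧ (c' : EReal) < b ∧ d ≤ c + c' := by
  induction a with
  | bot => exact absurd rfl ha
  | top =>
    obtain ⟨c', hc'⟩ : ∃ c' : ℝ, (c' : EReal) < b := by
      induction b with
      | bot => exact absurd rfl hb
      | top => exact ⟨0, by norm_num⟩
      | coe r => exact ⟨r - 1, by exact_mod_cast sub_one_lt r⟩
    exact ⟨d - c', c', by exact_mod_cast EReal.coe_lt_top _, hc', by linarith⟩
  | coe a0 =>
    induction b with
    | bot => exact absurd rfl hb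
    | top =>
      exact ⟨a0 - 1, d - (a0 - 1), by exact_mod_cast sub_one_lt a0,
        by exact_mod_cast EReal.coe_lt_top _, by linarith⟩
    | coe b0 =>
      have hd' : d < a0 + b0 := by exact_mod_cast hd
      refine ⟨a0 - (a0 + b0 - d) / 2, b0 - (a0 + b0 - d) / 2, ?_, ?_, by linarith⟩
      · exact_mod_cast by linarith
      · exact_mod_cast by linarith

private lemma stmt15_tendsto_add {C : EReal} (hC : C ≠ ⊥) {q : ℕ → ℝ}
    (hq : Tendsto q atTop (𝓝 0)) :
    Tendsto (fun ν => C + ((q ν : ℝ) : EReal)) atTop (𝓝 C) := by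
  induction C with
  | bot => exact absurd rfl hC
  | top =>
    refine (tendsto_congr fun ν => EReal.top_add_coe (q ν)).2 tendsto_const_nhds
  | coe r =>
    have h1 : Tendsto (fun ν => (r + q ν : ℝ)) atTop (𝓝 r) := by
      simpa using (tendsto_const_nhds (x := r) (f := atTop (α := ℕ))).add hq
    exact (tendsto_congr fun ν => (EReal.coe_add r (q ν)).symm).1 (EReal.tendsto_coe.2 h1)

/-- Composite setting. With
`f(u,x) = f₀(x) + h(u + Σᵢ pᵢGᵢ(x)) + ι_{{0}}(u)` and
`f^ν(u,x) = f₀(x) + h(u + Σᵢ pᵢ^νGᵢ(x)) + (θ^ν/2)‖u‖₂²`, if `θ^ν → ∞` and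
`θ^ν‖p^ν − p‖₂² → 0`, then `f^ν` epi-converges to `f` on `ℝ^m × ℝ^n`. -/
theorem stmt15 {s m n : ℕ}
    (f₀ : EuclideanSpace ℝ (Fin n) → EReal)
    (h : EuclideanSpace ℝ (Fin m) → EReal)
    (G : Fin s → EuclideanSpace ℝ (Fin n) → EuclideanSpace ℝ (Fin m))
    (hf₀proper : (∀ x, f₀ x ≠ ⊥) ∧ (∃ x, f₀ x ≠ ⊤)) (hf₀lsc : LowerSemicontinuous f₀)
    (hhproper : (∀ v, h v ≠ ⊥) ∧ (∃ v, h v ≠ ⊤)) (hhlsc : LowerSemicontinuous h)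
    (hG : ∀ i, Continuous (G i))
    (p : Fin s → ℝ) (hp : (∀ i, 0 ≤ p i) ∧ ∑ i, p i = 1)
    (pν : ℕ → Fin s → ℝ) (hpν : ∀ ν, (∀ i, 0 ≤ pν ν i) ∧ ∑ i, pν ν i = 1)
    (θν : ℕ → ℝ) (hθnn : ∀ ν, 0 ≤ θν ν)
    (hθ : Tendsto θν atTop atTop)
    (hθp : Tendsto (fun ν => θν ν * Real.sqrt (∑ i, (pν ν i - p i) ^ 2) ^ 2) atTop (𝓝 0)) :
    -- liminf condition of epi-convergence
    (∀ (u : EuclideanSpace ℝ (Fin m)) (x : EuclideanSpace ℝ (Fin n))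
       (useq : ℕ → EuclideanSpace ℝ (Fin m)) (xseq : ℕ → EuclideanSpace ℝ (Fin n)),
       Tendsto useq atTop (𝓝 u) → Tendsto xseq atTop (𝓝 x) →
       (if u = 0 then f₀ x + h (u + ∑ i, p i • G i x) else ⊤) ≤
         Filter.liminf (fun ν =>
           f₀ (xseq ν) + h (useq ν + ∑ i, pν ν i • G i (xseq ν))
             + ((θν ν / 2 * ‖useq ν‖ ^ 2 : ℝ) : EReal)) atTop) ∧
    -- limsup (recovery sequence) condition of epi-convergence
    (∀ (u : EuclideanSpace ℝ (Fin m)) (x : EuclideanSpace ℝ (Fin n)),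
       ∃ (useq : ℕ → EuclideanSpace ℝ (Fin m)) (xseq : ℕ → EuclideanSpace ℝ (Fin n)),
         Tendsto useq atTop (𝓝 u) ∧ Tendsto xseq atTop (𝓝 x) ∧
         Filter.limsup (fun ν =>
           f₀ (xseq ν) + h (useq ν + ∑ i, pν ν i • G i (xseq ν))
             + ((θν ν / 2 * ‖useq ν‖ ^ 2 : ℝ) : EReal)) atTop ≤
         (if u = 0 then f₀ x + h (u + ∑ i, p i • G i x) else ⊤)) := by
  -- notation
  set S : ℕ → ℝ := fun ν => ∑ i, (pν ν i - p i) ^ 2 with hSdef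
  have hSnn : ∀ ν, 0 ≤ S ν := fun ν => Finset.sum_nonneg fun i _ => sq_nonneg _
  have hθS : Tendsto (fun ν => θν ν * S ν) atTop (𝓝 0) := by
    refine hθp.congr fun ν => ?_
    rw [Real.sq_sqrt (hSnn ν)]
  -- S → 0
  have hS0 : Tendsto S atTop (𝓝 0) := by
    refine squeeze_zero' (Eventually.of_forall hSnn) ?_ hθS
    filter_upwards [hθ.eventually_ge_atTop 1] with ν hν
    calc S ν = 1 * S ν := (one_mul _).symm
    _ ≤ θν ν * S ν := mul_le_mul_of_nonneg_right hν (hSnn ν)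
  -- coordinatewise convergence
  have hpconv : ∀ i, Tendsto (fun ν => pν ν i) atTop (𝓝 (p i)) := by
    intro i
    have hsq : Tendsto (fun ν => (pν ν i - p i) ^ 2) atTop (𝓝 0) := by
      refine squeeze_zero (fun ν => sq_nonneg _) (fun ν => ?_) hS0
      exact Finset.single_le_sum (f := fun j => (pν ν j - p j) ^ 2)
        (fun j _ => sq_nonneg _) (Finset.mem_univ i)
    have habs : Tendsto (fun ν => |pν ν i - p i|) atTop (𝓝 0) := by
      have := (Real.continuous_sqrt.tendsto 0).comp hsq
      simpa [Function.comp_def, Real.sqrt_sq_eq_abs] using this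
    have : Tendsto (fun ν => pν ν i - p i) atTop (𝓝 0) :=
      (tendsto_zero_iff_abs_tendsto_zero _).2 habs
    simpa using this.add_const (p i)
  have hvconv : ∀ (xseq : ℕ → EuclideanSpace ℝ (Fin n)) (x : EuclideanSpace ℝ (Fin n)),
      Tendsto xseq atTop (𝓝 x) →
      Tendsto (fun ν => ∑ i, pν ν i • G i (xseq ν)) atTop (𝓝 (∑ i, p i • G i x)) := by
    intro xseq x hx
    exact tendsto_finset_sum _ fun i _ =>
      (hpconv i).smul (((hG i).tendsto x).comp hx)
  constructor
  · -- liminf condition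
    intro u x useq xseq hu hx
    by_cases h0 : u = 0
    · subst h0
      rw [if_pos rfl]
      set v : EuclideanSpace ℝ (Fin m) := (0 : EuclideanSpace ℝ (Fin m)) + ∑ i, p i • G i x
        with hvdef
      have hw : Tendsto (fun ν => useq ν + ∑ i, pν ν i • G i (xseq ν)) atTop (𝓝 v) :=
        hu.add (hvconv xseq x hx)
      refine EReal.ge_of_forall_gt_iff_ge.mp fun d hd => ?_
      obtain ⟨c, c', hc, hc', hdcc⟩ :=
        stmt15_split_lt_add (hf₀proper.1 x) (hhproper.1 v) d hd
      refine le_liminf_of_le (by isBoundedDefault) ?_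
      filter_upwards [hx.eventually (hf₀lsc x (c : EReal) hc),
        hw.eventually (hhlsc v (c' : EReal) hc')] with ν h1 h2
      have hc0 : (0 : EReal) ≤ ((θν ν / 2 * ‖useq ν‖ ^ 2 : ℝ) : EReal) := by
        exact_mod_cast mul_nonneg (div_nonneg (hθnn ν) two_pos.le) (sq_nonneg _)
      calc (d : EReal) ≤ (c : EReal) + (c' : EReal) := by exact_mod_cast hdcc
      _ ≤ f₀ (xseq ν) + h (useq ν + ∑ i, pν ν i • G i (xseq ν)) := add_le_add h1.le h2.le
      _ ≤ _ := le_add_of_nonneg_right hc0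
    · rw [if_neg h0]
      set v : EuclideanSpace ℝ (Fin m) := u + ∑ i, p i • G i x with hvdef
      have hw : Tendsto (fun ν => useq ν + ∑ i, pν ν i • G i (xseq ν)) atTop (𝓝 v) :=
        hu.add (hvconv xseq x hx)
      obtain ⟨c, _, hc⟩ := EReal.exists_between_coe_real
        (Ne.bot_lt (hf₀proper.1 x))
      obtain ⟨c', _, hc'⟩ := EReal.exists_between_coe_real
        (Ne.bot_lt (hhproper.1 v))
      -- quadratic term blows up
      have hnorm : Tendsto (fun ν => ‖useq ν‖ ^ 2) atTop (𝓝 (‖u‖ ^ 2)) :=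
        ((continuous_norm.tendsto u).comp hu).pow 2
      have hupos : 0 < ‖u‖ ^ 2 := pow_pos (norm_pos_iff.mpr h0) 2
      have hq : Tendsto (fun ν => θν ν / 2 * ‖useq ν‖ ^ 2) atTop atTop :=
        Tendsto.atTop_mul_pos hupos (hθ.atTop_div_const two_pos) hnorm
      refine EReal.ge_of_forall_gt_iff_ge.mp fun d _ => ?_
      refine le_liminf_of_le (by isBoundedDefault) ?_
      filter_upwards [hx.eventually (hf₀lsc x (c : EReal) hc),
        hw.eventually (hhlsc v (c' : EReal) hc'),
        hq.eventually_ge_atTop (d - c - c')] with ν h1 h2 h3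
      have key : (d : EReal) ≤ (c : EReal) + (c' : EReal)
          + ((θν ν / 2 * ‖useq ν‖ ^ 2 : ℝ) : EReal) := by
        exact_mod_cast (by linarith : d ≤ c + c' + θν ν / 2 * ‖useq ν‖ ^ 2)
      exact key.trans (add_le_add (add_le_add h1.le h2.le) le_rfl)
  · -- limsup condition
    intro u x
    by_cases h0 : u = 0
    · subst h0
      refine ⟨fun ν => (∑ i, p i • G i x) - ∑ i, pν ν i • G i x, fun _ => x, ?_, tendsto_const_nhds, ?_⟩
      · have := (tendsto_const_nhds (x := ∑ i, p i • G i x) (f := atTop (α := ℕ))).sub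
          (hvconv (fun _ => x) x tendsto_const_nhds)
        simpa using this
      · rw [if_pos rfl]
        have harg : ∀ ν, ((∑ i, p i • G i x) - ∑ i, pν ν i • G i x) + ∑ i, pν ν i • G i x
            = (0 : EuclideanSpace ℝ (Fin m)) + ∑ i, p i • G i x := by
          intro ν; rw [sub_add_cancel, zero_add]
        set C : EReal := f₀ x + h ((0 : EuclideanSpace ℝ (Fin m)) + ∑ i, p i • G i x) with hC
        -- quadratic term tends to 0
        set M2 : ℝ := ∑ i, ‖G i x‖ ^ 2 with hM2
        have hM2nn : 0 ≤ M2 := Finset.sum_nonneg fun i _ => sq_nonneg _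
        have hnormbd : ∀ ν, ‖(∑ i, p i • G i x) - ∑ i, pν ν i • G i x‖ ^ 2 ≤ S ν * M2 := by
          intro ν
          have h1 : ‖(∑ i, p i • G i x) - ∑ i, pν ν i • G i x‖
              ≤ ∑ i, |p i - pν ν i| * ‖G i x‖ := by
            rw [← Finset.sum_sub_distrib]
            refine (norm_sum_le _ _).trans (le_of_eq (Finset.sum_congr rfl fun i _ => ?_))
            rw [← sub_smul, norm_smul, Real.norm_eq_abs]
          have h2 : (∑ i, |p i - pν ν i| * ‖G i x‖) ^ 2 ≤ S ν * M2 := by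
            have := Finset.sum_mul_sq_le_sq_mul_sq Finset.univ
              (fun i => |p i - pν ν i|) (fun i => ‖G i x‖)
            calc (∑ i, |p i - pν ν i| * ‖G i x‖) ^ 2
                ≤ (∑ i, |p i - pν ν i| ^ 2) * ∑ i, ‖G i x‖ ^ 2 := this
            _ = S ν * M2 := by
                rw [hSdef, hM2]
                congr 1
                exact Finset.sum_congr rfl fun i _ => by
                  rw [sq_abs, ← neg_sub (pν ν i) (p i), neg_sq]
          calc ‖(∑ i, p i • G i x) - ∑ i, pν ν i • G i x‖ ^ 2
              ≤ (∑ i, |p i - pν ν i| * ‖G i x‖) ^ 2 := by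
                apply pow_le_pow_left₀ (norm_nonneg _) h1
          _ ≤ S ν * M2 := h2
        have hq0 : Tendsto (fun ν => θν ν / 2
            * ‖(∑ i, p i • G i x) - ∑ i, pν ν i • G i x‖ ^ 2) atTop (𝓝 0) := by
          refine squeeze_zero (fun ν => mul_nonneg (div_nonneg (hθnn ν) two_pos.le) (sq_nonneg _))
            (fun ν => ?_) (by simpa using (hθS.mul_const (M2 / 2)))
          calc θν ν / 2 * ‖(∑ i, p i • G i x) - ∑ i, pν ν i • G i x‖ ^ 2
              ≤ θν ν / 2 * (S ν * M2) := by
                apply mul_le_mul_of_nonneg_left (hnormbd ν) (div_nonneg (hθnn ν) two_pos.le)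
          _ = θν ν * S ν * (M2 / 2) := by ring
        -- the function equals C + quadratic, which tends to C.
        have heqF : ∀ ν, f₀ x + h (((∑ i, p i • G i x) - ∑ i, pν ν i • G i x)
              + ∑ i, pν ν i • G i x)
            + ((θν ν / 2 * ‖(∑ i, p i • G i x) - ∑ i, pν ν i • G i x‖ ^ 2 : ℝ) : EReal)
            = C + ((θν ν / 2 * ‖(∑ i, p i • G i x) - ∑ i, pν ν i • G i x‖ ^ 2 : ℝ) : EReal) := by
          intro ν; rw [harg ν]
        have hCbot : C ≠ ⊥ := by
          rw [hC, Ne, EReal.add_eq_bot_iff]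
          push_neg
          exact ⟨hf₀proper.1 x, hhproper.1 _⟩
        have hlim : Tendsto (fun ν => C
            + ((θν ν / 2 * ‖(∑ i, p i • G i x) - ∑ i, pν ν i • G i x‖ ^ 2 : ℝ) : EReal))
            atTop (𝓝 C) := stmt15_tendsto_add hCbot hq0
        exact le_of_eq (((tendsto_congr heqF).2 hlim).limsup_eq)
    · exact ⟨fun _ => u, fun _ => x, tendsto_const_nhds, tendsto_const_nhds,
        by rw [if_neg h0]; exact le_top⟩
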